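/- Let X ⊆ ℝ^n be convex closed, f convex on X, d differentiable and 1-strongly convex with Bregman divergence V[x](z) = d(z) − d(x) − ⟨∇d(x), z − x⟩, h > 0 a step-size, x ∈ X, and let g be a subgradient of f at x. If x⁺ = argmin_{z ∈ X} { ⟨h·g, z⟩ + V[x](z) }, then for any z ∈ X: h·(f(x) − f(z)) ≤ h·⟨g, x − z⟩ ≤ (h²/2)·‖g‖₂² + V[x](z) − V[x⁺](z). -/

import Mathlib

open scoped RealInnerProductSpace

/-- Main property of the Mirror Descent step: for any `z ∈ X`,
`h (f(x) - f(z)) ≤ h ⟪g, x - z⟫ ≤ (h²/2)‖g‖² + V[x](z) - V[x⁺](z)`. -/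
theorem mirror_descent_step_property {n : ℕ}
    (X : Set (EuclideanSpace ℝ (Fin n))) (hXconv : Convex ℝ X) (hXcl : IsClosed X)
    (f : EuclideanSpace ℝ (Fin n) → ℝ) (hfconv : ConvexOn ℝ X f)
    (d : EuclideanSpace ℝ (Fin n) → ℝ)
    (gd : EuclideanSpace ℝ (Fin n) → EuclideanSpace ℝ (Fin n))
    (hgd : ∀ w, HasGradientAt d (gd w) w)
    (hdsc : ∀ w v, d w + ⟪gd w, v - w⟫ + 1 / 2 * ‖v - w‖ ^ 2 ≤ d v)
    (V : EuclideanSpace ℝ (Fin n) → EuclideanSpace ℝ (Fin n) → ℝ)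
    (hV : ∀ w v, V w v = d v - d w - ⟪gd w, v - w⟫)
    (h : ℝ) (hh : 0 < h)
    (x : EuclideanSpace ℝ (Fin n)) (hx : x ∈ X)
    (gx : EuclideanSpace ℝ (Fin n))
    (hgx : ∀ z ∈ X, f x + ⟪gx, z - x⟫ ≤ f z)
    (xp : EuclideanSpace ℝ (Fin n)) (hxpX : xp ∈ X)
    (hxpmin : IsMinOn (fun z => ⟪h • gx, z⟫ + V x z) X xp) :
    ∀ z ∈ X, h * (f x - f z) ≤ h * ⟪gx, x - z⟫ ∧
      h * ⟪gx, x - z⟫ ≤ h ^ 2 / 2 * ‖gx‖ ^ 2 + V x z - V xp z := by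
  intro z hz
  -- First part: subgradient inequality
  have hsub := hgx z hz
  have hflip : ⟪gx, x - z⟫ = -⟪gx, z - x⟫ := by rw [← inner_neg_right, neg_sub]
  have part1 : h * (f x - f z) ≤ h * ⟪gx, x - z⟫ := by
    have : f x - f z ≤ ⟪gx, x - z⟫ := by rw [hflip]; linarith
    exact mul_le_mul_of_nonneg_left this hh.le
  refine ⟨part1, ?_⟩
  -- Derivative of the objective at xp
  have key : HasFDerivWithinAt (fun z => ⟪h • gx, z⟫ + V x z)
      (InnerProductSpace.toDual ℝ (EuclideanSpace ℝ (Fin n)) (h • gx)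
        + InnerProductSpace.toDual ℝ (EuclideanSpace ℝ (Fin n)) (gd xp)
        - InnerProductSpace.toDual ℝ (EuclideanSpace ℝ (Fin n)) (gd x)) X xp := by
    have h1 : HasFDerivAt (fun w : EuclideanSpace ℝ (Fin n) => ⟪h • gx, w⟫)
        (InnerProductSpace.toDual ℝ (EuclideanSpace ℝ (Fin n)) (h • gx)) xp :=
      (InnerProductSpace.toDual ℝ (EuclideanSpace ℝ (Fin n)) (h • gx)).hasFDerivAt
    have h2 : HasFDerivAt d (InnerProductSpace.toDual ℝ (EuclideanSpace ℝ (Fin n)) (gd xp)) xp :=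
      (hgd xp).hasFDerivAt
    have h3 : HasFDerivAt (fun w : EuclideanSpace ℝ (Fin n) => ⟪gd x, w⟫)
        (InnerProductSpace.toDual ℝ (EuclideanSpace ℝ (Fin n)) (gd x)) xp :=
      (InnerProductSpace.toDual ℝ (EuclideanSpace ℝ (Fin n)) (gd x)).hasFDerivAt
    have hmain : HasFDerivAt
        (fun w : EuclideanSpace ℝ (Fin n) => ⟪h • gx, w⟫ + (d w - d x - (⟪gd x, w⟫ - ⟪gd x, x⟫)))
        (InnerProductSpace.toDual ℝ (EuclideanSpace ℝ (Fin n)) (h • gx)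
          + InnerProductSpace.toDual ℝ (EuclideanSpace ℝ (Fin n)) (gd xp)
          - InnerProductSpace.toDual ℝ (EuclideanSpace ℝ (Fin n)) (gd x)) xp := by
      have := (h1.add ((h2.sub_const (d x)).sub (h3.sub_const ⟪gd x, x⟫)))
      refine HasFDerivAt.congr_fderiv this ?_
      ext v
      simp [ContinuousLinearMap.sub_apply, ContinuousLinearMap.add_apply]
      ring
    exact hmain.hasFDerivWithinAt.congr (fun w _ => by rw [hV, inner_sub_right])
      (by rw [hV, inner_sub_right])
  have hcone : z - xp ∈ posTangentConeAt X xp :=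
    sub_mem_posTangentConeAt_of_segment_subset (hXconv.segment_subset hxpX hz)
  have hlocmin : IsLocalMinOn (fun z => ⟪h • gx, z⟫ + V x z) X xp :=
    hxpmin.filter_mono inf_le_right
  have hvar0 := hlocmin.hasFDerivWithinAt_nonneg key hcone
  have hvar : 0 ≤ ⟪h • gx, z - xp⟫ + ⟪gd xp, z - xp⟫ - ⟪gd x, z - xp⟫ := by
    simpa only [ContinuousLinearMap.sub_apply, ContinuousLinearMap.add_apply,
      InnerProductSpace.toDual_apply_apply] using hvar0
  have hsmul : ⟪h • gx, z - xp⟫ = h * ⟪gx, z - xp⟫ := real_inner_smul_left _ _ _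
  -- three-point identity
  have h3pt : ⟪gd xp, z - xp⟫ - ⟪gd x, z - xp⟫ = V x z - V xp z - V x xp := by
    simp only [hV]
    have e1 : ⟪gd x, z - x⟫ = ⟪gd x, z - xp⟫ + ⟪gd x, xp - x⟫ := by
      rw [← inner_add_right]; congr 1; abel
    linarith
  -- strong convexity lower bound
  have hsc : 1 / 2 * ‖xp - x‖ ^ 2 ≤ V x xp := by
    have := hdsc x xp
    rw [hV]; linarith
  -- Young's inequality
  have hyoung : h * ⟪gx, x - xp⟫ ≤ h ^ 2 / 2 * ‖gx‖ ^ 2 + 1 / 2 * ‖xp - x‖ ^ 2 := by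
    have h1 : ⟪gx, x - xp⟫ ≤ ‖gx‖ * ‖x - xp‖ := real_inner_le_norm _ _
    have h2 : ‖x - xp‖ = ‖xp - x‖ := norm_sub_rev _ _
    have h1' : h * ⟪gx, x - xp⟫ ≤ h * (‖gx‖ * ‖x - xp‖) :=
      mul_le_mul_of_nonneg_left h1 hh.le
    rw [h2] at h1'
    nlinarith [sq_nonneg (h * ‖gx‖ - ‖xp - x‖)]
  have hsplit : ⟪gx, x - z⟫ = ⟪gx, x - xp⟫ - ⟪gx, z - xp⟫ := by
    rw [← inner_sub_right]; congr 1; abel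
  rw [hsplit]
  nlinarith [hvar, hsmul, h3pt, hsc, hyoung]
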